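/- Let p be an odd prime, let a be a positive integer, and let A, B be integers with Δ = A² − 4B not divisible by p. Let u, v : ℕ → ℤ be the Lucas sequences with parameters (A, B): u_0 = 0, u_1 = 1, v_0 = 2, v_1 = A, and u_{n+1} = A·u_n − B·u_{n−1}, v_{n+1} = A·v_n − B·v_{n−1} for n ≥ 1. Let ε = J(Δ | p^a) be the Jacobi symbol. Then for every n ∈ ℕ: (1) 2·u_{n+p^a} ≡ A·u_n + ε·v_n (mod p); (2) 2·B·u_n ≡ A·u_{n+p^a} − ε·v_{n+p^a} (mod p). -/

import Mathlib

open Polynomial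

private lemma rec2 {R : Type*} [CommRing R] (A B : R) (w : ℕ → R)
    (hrec : ∀ n, w (n + 2) = A * w (n + 1) - B * w n)
    (h0 : w 0 = 0) (h1 : w 1 = 0) : ∀ n, w n = 0 := by
  have H : ∀ n, w n = 0 ∧ w (n + 1) = 0 := by
    intro n
    induction n with
    | zero => exact ⟨h0, h1⟩
    | succ k ih => exact ⟨ih.2, by rw [hrec, ih.1, ih.2]; ring⟩
  exact fun n => (H n).1

/-- closed form for Lucas sequences in terms of roots. -/
private lemma lucas_closed {K : Type*} [Field K] (A B : ℤ) (u v : ℕ → ℤ)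
    (hu0 : u 0 = 0) (hu1 : u 1 = 1) (hv0 : v 0 = 2) (hv1 : v 1 = A)
    (hurec : ∀ n : ℕ, u (n + 2) = A * u (n + 1) - B * u n)
    (hvrec : ∀ n : ℕ, v (n + 2) = A * v (n + 1) - B * v n)
    (α β : K) (hsum : α + β = (A : K)) (hprod : α * β = (B : K)) :
    ∀ n : ℕ, ((u n : K)) * (α - β) = α ^ n - β ^ n ∧ (v n : K) = α ^ n + β ^ n := by
  have hα : α ^ 2 = (A : K) * α - (B : K) := by rw [← hsum, ← hprod]; ring
  have hβ : β ^ 2 = (A : K) * β - (B : K) := by rw [← hsum, ← hprod]; ring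
  have H : ∀ n : ℕ,
      (((u n : K)) * (α - β) = α ^ n - β ^ n ∧ (v n : K) = α ^ n + β ^ n) ∧
      (((u (n+1) : K)) * (α - β) = α ^ (n+1) - β ^ (n+1) ∧
        (v (n+1) : K) = α ^ (n+1) + β ^ (n+1)) := by
    intro n
    induction n with
    | zero =>
      refine ⟨⟨?_, ?_⟩, ?_, ?_⟩
      · rw [hu0]; push_cast; ring
      · rw [hv0]; push_cast; ring
      · rw [hu1]; push_cast; ring
      · rw [hv1, pow_one, pow_one, hsum]
    | succ k ih =>
      refine ⟨ih.2, ?_, ?_⟩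
      · have hq : ((u (k+2) : K)) = (A : K) * (u (k+1) : K) - (B : K) * (u k : K) := by
          rw [hurec k]; push_cast; ring
        rw [hq]
        linear_combination (A : K) * ih.2.1 - (B : K) * ih.1.1 - α ^ k * hα + β ^ k * hβ
      · have hq : ((v (k+2) : K)) = (A : K) * (v (k+1) : K) - (B : K) * (v k : K) := by
          rw [hvrec k]; push_cast; ring
        rw [hq]
        linear_combination (A : K) * ih.2.2 - (B : K) * ih.1.2 - α ^ k * hα - β ^ k * hβ
  exact fun n => (H n).1

/-- the key congruences `u m ≡ e`, `v m ≡ A` mod p. -/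
private lemma key {p : ℕ} [Fact p.Prime] {K : Type*} [Field K] (ψ : ZMod p →+* K)
    (A B : ℤ) (u v : ℕ → ℤ)
    (hu0 : u 0 = 0) (hu1 : u 1 = 1) (hv0 : v 0 = 2) (hv1 : v 1 = A)
    (hurec : ∀ n : ℕ, u (n + 2) = A * u (n + 1) - B * u n)
    (hvrec : ∀ n : ℕ, v (n + 2) = A * v (n + 1) - B * v n)
    (α β : K) (hsum : α + β = (A : K)) (hprod : α * β = (B : K))
    (hd0 : α - β ≠ 0) (m : ℕ) (e : ℤ)
    (hpow : (α ^ m = α ∧ β ^ m = β ∧ ((e : ZMod p)) = 1) ∨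
            (α ^ m = β ∧ β ^ m = α ∧ ((e : ZMod p)) = -1)) :
    ((u m : ZMod p)) = (e : ZMod p) ∧ ((v m : ZMod p)) = (A : ZMod p) := by
  have hcf := lucas_closed A B u v hu0 hu1 hv0 hv1 hurec hvrec α β hsum hprod m
  have hinj : Function.Injective ψ := ψ.injective
  have hcu : (u m : K) = ψ ((u m : ZMod p)) := (map_intCast ψ _).symm
  have hcv : (v m : K) = ψ ((v m : ZMod p)) := (map_intCast ψ _).symm
  have hce : (e : K) = ψ ((e : ZMod p)) := (map_intCast ψ _).symm
  have hcA : (A : K) = ψ ((A : ZMod p)) := (map_intCast ψ _).symm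
  rcases hpow with ⟨ha, hb, he⟩ | ⟨ha, hb, he⟩
  · have h1 : (u m : K) = (e : K) := by
      have : ((u m : K)) * (α - β) = (e : K) * (α - β) := by
        rw [hcf.1, ha, hb, hce, he, map_one]; ring
      exact mul_right_cancel₀ hd0 this
    have h2 : (v m : K) = (A : K) := by rw [hcf.2, ha, hb, hsum]
    constructor
    · exact hinj (by rw [← hcu, ← hce, h1])
    · exact hinj (by rw [← hcv, ← hcA, h2])
  · have h1 : (u m : K) = (e : K) := by
      have : ((u m : K)) * (α - β) = (e : K) * (α - β) := by
        rw [hcf.1, ha, hb, hce, he, map_neg, map_one]; ring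
      exact mul_right_cancel₀ hd0 this
    have h2 : (v m : K) = (A : K) := by rw [hcf.2, ha, hb, add_comm, hsum]
    constructor
    · exact hinj (by rw [← hcu, ← hce, h1])
    · exact hinj (by rw [← hcv, ← hcA, h2])

theorem stmt_19 (p : ℕ) (hp : p.Prime) (hp2 : p ≠ 2) (a : ℕ) (ha : 0 < a)
    (A B : ℤ) (hΔ : ¬ ((p : ℤ) ∣ A ^ 2 - 4 * B))
    (u v : ℕ → ℤ)
    (hu0 : u 0 = 0) (hu1 : u 1 = 1)
    (hv0 : v 0 = 2) (hv1 : v 1 = A)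
    (hurec : ∀ n : ℕ, u (n + 2) = A * u (n + 1) - B * u n)
    (hvrec : ∀ n : ℕ, v (n + 2) = A * v (n + 1) - B * v n) :
    let ε : ℤ := jacobiSym (A ^ 2 - 4 * B) (p ^ a)
    ∀ n : ℕ,
      2 * u (n + p ^ a) ≡ A * u n + ε * v n [ZMOD (p : ℤ)] ∧
      2 * B * u n ≡ A * u (n + p ^ a) - ε * v (n + p ^ a) [ZMOD (p : ℤ)] := by
  intro ε
  haveI : Fact p.Prime := ⟨hp⟩
  set Δ : ℤ := A ^ 2 - 4 * B with hΔdef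
  set m : ℕ := p ^ a with hm
  have hΔ0 : (Δ : ZMod p) ≠ 0 := by
    rw [Ne, ZMod.intCast_zmod_eq_zero_iff_dvd]
    exact hΔ
  have h2p : (2 : ZMod p) ≠ 0 := by
    have : ((2 : ℕ) : ZMod p) ≠ 0 := by
      rw [Ne, ZMod.natCast_eq_zero_iff]
      intro hdvd
      exact hp2 ((Nat.prime_dvd_prime_iff_eq hp Nat.prime_two).mp hdvd)
    exact_mod_cast this
  have hεval : ε = (legendreSym p Δ) ^ a := by
    rw [show ε = jacobiSym Δ (p ^ a) from rfl, jacobiSym.pow_right,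
      jacobiSym.legendreSym.to_jacobiSym]
  -- main congruences  u m ≡ ε,  v m ≡ A  mod p :
  have hmain : ((u m : ZMod p)) = (ε : ZMod p) ∧ ((v m : ZMod p)) = (A : ZMod p) := by
    by_cases hsq : IsSquare ((Δ : ZMod p))
    · -- split case: roots in ZMod p
      obtain ⟨s, hs⟩ := hsq
      have hs0 : s ≠ 0 := by
        intro h; apply hΔ0; rw [hs, h, mul_zero]
      have hε1 : ε = 1 := by
        rw [hεval, (legendreSym.eq_one_iff p hΔ0).mpr ⟨s, hs⟩, one_pow]
      set α : ZMod p := ((A : ZMod p) + s) * 2⁻¹ with hαdef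
      set β : ZMod p := ((A : ZMod p) - s) * 2⁻¹ with hβdef
      have hsum : α + β = (A : ZMod p) := by
        rw [hαdef, hβdef]; field_simp; ring
      have hprod : α * β = (B : ZMod p) := by
        rw [hαdef, hβdef]
        have hΔc : ((A : ZMod p)) ^ 2 - 4 * (B : ZMod p) = s * s := by
          rw [← hs, hΔdef]; push_cast; ring
        field_simp
        linear_combination hΔc
      have hdiff : α - β = s := by
        rw [hαdef, hβdef]; field_simp; ring
      have hd0 : α - β ≠ 0 := by rw [hdiff]; exact hs0
      have hfixgen : ∀ (k : ℕ) (x : ZMod p), x ^ p ^ k = x := by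
        intro k
        induction k with
        | zero => intro x; simp
        | succ j ih => intro x; rw [pow_succ, pow_mul, ih x, ZMod.pow_card]
      have hfix : ∀ x : ZMod p, x ^ m = x := by
        intro x; rw [hm]; exact hfixgen a x
      have := key (RingHom.id (ZMod p)) A B u v hu0 hu1 hv0 hv1 hurec hvrec α β
        hsum hprod hd0 m ε (Or.inl ⟨hfix α, hfix β, by rw [hε1]; norm_num⟩)
      exact this
    · -- inert case: roots in the quadratic extension
      have hεm1 : ε = (-1) ^ a := by
        rw [hεval, (legendreSym.eq_neg_one_iff p).mpr hsq]
      have hirr : Irreducible (X ^ 2 - C ((Δ : ZMod p))) := by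
        apply X_pow_sub_C_irreducible_of_prime Nat.prime_two
        intro b hb
        exact hsq ⟨b, by rw [← hb]; ring⟩
      haveI : Fact (Irreducible (X ^ 2 - C ((Δ : ZMod p)))) := ⟨hirr⟩
      set K := AdjoinRoot (X ^ 2 - C ((Δ : ZMod p))) with hK
      set ψ : ZMod p →+* K := AdjoinRoot.of _ with hψ
      haveI : CharP K p := charP_of_injective_ringHom ψ.injective p
      set d : K := AdjoinRoot.root _ with hd
      have hd2 : d ^ 2 = ψ ((Δ : ZMod p)) := by
        have h0 := AdjoinRoot.eval₂_root (X ^ 2 - C ((Δ : ZMod p)))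
        rw [eval₂_sub, eval₂_pow, eval₂_X, eval₂_C, sub_eq_zero] at h0
        exact h0
      have h2K : (2 : K) ≠ 0 := by
        have : (2 : K) = ψ (2 : ZMod p) := by rw [map_ofNat]
        rw [this, Ne, map_eq_zero_iff ψ ψ.injective]
        exact h2p
      have hΔK : ψ ((Δ : ZMod p)) ≠ 0 := by
        rw [Ne, map_eq_zero_iff ψ ψ.injective]; exact hΔ0
      have hdne : d ≠ 0 := by
        intro h; apply hΔK; rw [← hd2, h]; ring
      set α : K := (ψ ((A : ZMod p)) + d) * 2⁻¹ with hαdef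
      set β : K := (ψ ((A : ZMod p)) - d) * 2⁻¹ with hβdef
      have hcA : (A : K) = ψ ((A : ZMod p)) := (map_intCast ψ _).symm
      have hcB : (B : K) = ψ ((B : ZMod p)) := (map_intCast ψ _).symm
      have hcΔ : (Δ : K) = ψ ((Δ : ZMod p)) := (map_intCast ψ _).symm
      have hsum : α + β = (A : K) := by
        rw [hαdef, hβdef, hcA]; linear_combination (ψ ((A : ZMod p))) * mul_inv_cancel₀ h2K
      have hprod : α * β = (B : K) := by
        have hΔc : (A : K) ^ 2 - 4 * (B : K) = d ^ 2 := by
          rw [hd2, ← hcΔ]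
          show (A : K) ^ 2 - 4 * (B : K) = ((A ^ 2 - 4 * B : ℤ) : K)
          rw [hcA, hcB, hcΔ.trans (congrArg ψ (congrArg Int.cast hΔdef))]
          simp only [Int.cast_sub, Int.cast_pow, Int.cast_mul, Int.cast_ofNat, map_sub, map_pow,
            map_mul, map_ofNat]
        rw [hαdef, hβdef, ← hcA]
        linear_combination ((2 : K)⁻¹ * (2 : K)⁻¹) * hΔc + ((B : K) * ((2 : K) * (2 : K)⁻¹ + 1)) * mul_inv_cancel₀ h2K
      have hdiff : α - β = d := by
        rw [hαdef, hβdef]; linear_combination d * mul_inv_cancel₀ h2K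
      have hd0 : α - β ≠ 0 := by rw [hdiff]; exact hdne
      -- Frobenius d^p = -d
      have hpodd : p = 2 * (p / 2) + 1 := by
        have hmod : p % 2 = 1 := Nat.odd_iff.mp (hp.odd_of_ne_two hp2)
        omega
      have hΔpow : ((Δ : ZMod p)) ^ (p / 2) = -1 := by
        have h1 := legendreSym.eq_pow p Δ
        rw [(legendreSym.eq_neg_one_iff p).mpr hsq] at h1
        rw [← h1]; push_cast; ring
      have hdp : d ^ p = -d := by
        calc d ^ p = (d ^ 2) ^ (p / 2) * d := by
              rw [← pow_mul, ← pow_succ, ← hpodd]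
        _ = ψ (((Δ : ZMod p)) ^ (p / 2)) * d := by rw [hd2, map_pow]
        _ = -d := by rw [hΔpow, map_neg, map_one]; ring
      have hψfix : ∀ x : ZMod p, (ψ x) ^ p = ψ x := by
        intro x; rw [← map_pow, ZMod.pow_card]
      have h2fix : (2 : K) ^ p = 2 := by
        have h2 : (2 : K) = ψ (2 : ZMod p) := by rw [map_ofNat]
        rw [h2, hψfix]
      have hinvfix : ((2 : K)⁻¹) ^ p = (2 : K)⁻¹ := by
        rw [inv_pow, h2fix]
      have hfrobα : α ^ p = β := by
        rw [hαdef, hβdef, mul_pow, add_pow_char, hψfix, hdp, hinvfix]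
        ring
      have hfrobβ : β ^ p = α := by
        rw [hβdef, hαdef, mul_pow, sub_pow_char, hψfix, hdp, hinvfix]
        ring
      have hiter : ∀ k : ℕ, (Even k ∧ α ^ (p ^ k) = α ∧ β ^ (p ^ k) = β) ∨
          (¬ Even k ∧ α ^ (p ^ k) = β ∧ β ^ (p ^ k) = α) := by
        intro k
        induction k with
        | zero => exact Or.inl ⟨Even.zero, by simp, by simp⟩
        | succ j ih =>
          rcases ih with ⟨hev, h1, h2⟩ | ⟨hev, h1, h2⟩
          · refine Or.inr ⟨by simpa [Nat.even_add_one] using hev, ?_, ?_⟩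
            · simp only [pow_succ, pow_mul, h1, hfrobα]
            · simp only [pow_succ, pow_mul, h2, hfrobβ]
          · refine Or.inl ⟨by simpa [Nat.even_add_one] using hev, ?_, ?_⟩
            · simp only [pow_succ, pow_mul, h1, hfrobβ]
            · simp only [pow_succ, pow_mul, h2, hfrobα]
      have hpow : (α ^ m = α ∧ β ^ m = β ∧ ((ε : ZMod p)) = 1) ∨
          (α ^ m = β ∧ β ^ m = α ∧ ((ε : ZMod p)) = -1) := by
        rcases hiter a with ⟨hev, h1, h2⟩ | ⟨hev, h1, h2⟩
        · refine Or.inl ⟨h1, h2, ?_⟩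
          rw [hεm1, hev.neg_one_pow]; norm_num
        · refine Or.inr ⟨h1, h2, ?_⟩
          rw [hεm1, (Nat.not_even_iff_odd.mp hev).neg_one_pow]; push_cast; ring
      exact key ψ A B u v hu0 hu1 hv0 hv1 hurec hvrec α β hsum hprod hd0 m ε hpow
  obtain ⟨hU, hV⟩ := hmain
  have hεsqZ : ε ^ 2 = 1 := by
    rw [hεval, ← pow_mul, mul_comm a 2, pow_mul, legendreSym.sq_one p hΔ0, one_pow]
  have hεsq : (ε : ZMod p) ^ 2 = 1 := by
    have h := congrArg (fun z : ℤ => (z : ZMod p)) hεsqZ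
    push_cast at h ⊢; linear_combination h
  -- exact integer identities
  have I2 : ∀ n : ℕ, 2 * u (n + 1) = A * u n + v n := by
    have H : ∀ n : ℕ, (2 * u (n + 1) = A * u n + v n) ∧
        (2 * u (n + 2) = A * u (n + 1) + v (n + 1)) := by
      intro n
      induction n with
      | zero =>
        refine ⟨by rw [hu1, hu0, hv0]; ring, ?_⟩
        rw [hurec 0, hu1, hu0, hv1]; ring
      | succ k ih =>
        refine ⟨ih.2, ?_⟩
        rw [hurec (k + 1)]
        linear_combination A * ih.2 - B * ih.1 - hvrec k - A * hurec k
    exact fun n => (H n).1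
  have I3 : ∀ n : ℕ, 2 * v (n + 1) = A * v n + Δ * u n := by
    have H : ∀ n : ℕ, (2 * v (n + 1) = A * v n + Δ * u n) ∧
        (2 * v (n + 2) = A * v (n + 1) + Δ * u (n + 1)) := by
      intro n
      induction n with
      | zero =>
        refine ⟨by rw [hv1, hv0, hu0]; ring, ?_⟩
        rw [hvrec 0, hv1, hv0, hu1, hΔdef]; ring
      | succ k ih =>
        refine ⟨ih.2, ?_⟩
        rw [hvrec (k + 1)]
        linear_combination A * ih.2 - B * ih.1 - Δ * hurec k - A * hvrec k
    exact fun n => (H n).1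
  -- casts of the recurrences and identities
  have cu : ∀ k : ℕ, ((u (k + 2) : ZMod p)) =
      (A : ZMod p) * (u (k + 1) : ZMod p) - (B : ZMod p) * (u k : ZMod p) := by
    intro k; rw [hurec k]; push_cast; ring
  have cv : ∀ k : ℕ, ((v (k + 2) : ZMod p)) =
      (A : ZMod p) * (v (k + 1) : ZMod p) - (B : ZMod p) * (v k : ZMod p) := by
    intro k; rw [hvrec k]; push_cast; ring
  have cI2 : (2 : ZMod p) * (u (m + 1) : ZMod p) =
      (A : ZMod p) * (u m : ZMod p) + (v m : ZMod p) := by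
    have := I2 m
    have h := congrArg (fun z : ℤ => (z : ZMod p)) this
    push_cast at h ⊢; linear_combination h
  have cI3 : (2 : ZMod p) * (v (m + 1) : ZMod p) =
      (A : ZMod p) * (v m : ZMod p) + (Δ : ZMod p) * (u m : ZMod p) := by
    have := I3 m
    have h := congrArg (fun z : ℤ => (z : ZMod p)) this
    push_cast at h ⊢; linear_combination h
  have hΔcast : (Δ : ZMod p) = (A : ZMod p) ^ 2 - 4 * (B : ZMod p) := by
    show ((A ^ 2 - 4 * B : ℤ) : ZMod p) = (A : ZMod p) ^ 2 - 4 * (B : ZMod p)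
    push_cast; ring
  rw [hU, hV] at cI2
  rw [hU, hV, hΔcast] at cI3
  -- first family
  have main1 : ∀ n : ℕ, 2 * ((u (n + m) : ZMod p)) - (A : ZMod p) * (u n : ZMod p)
      - (ε : ZMod p) * (v n : ZMod p) = 0 := by
    apply rec2 (A : ZMod p) (B : ZMod p)
    · intro n
      have e1 : n + 2 + m = n + m + 2 := by omega
      have e2 : n + 1 + m = n + m + 1 := by omega
      rw [e1, e2, cu (n + m), cu n, cv n]
      ring
    · rw [hu0, hv0, Nat.zero_add]
      push_cast
      linear_combination 2 * hU
    · rw [hu1, hv1, Nat.add_comm 1 m]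
      push_cast
      linear_combination cI2
  -- second family
  have main2 : ∀ n : ℕ, 2 * (B : ZMod p) * ((u n : ZMod p))
      - (A : ZMod p) * (u (n + m) : ZMod p) + (ε : ZMod p) * (v (n + m) : ZMod p) = 0 := by
    apply rec2 (A : ZMod p) (B : ZMod p)
    · intro n
      have e1 : n + 2 + m = n + m + 2 := by omega
      have e2 : n + 1 + m = n + m + 1 := by omega
      rw [e1, e2, cu (n + m), cv (n + m), cu n]
      ring
    · rw [hu0, Nat.zero_add]
      push_cast
      linear_combination -(A : ZMod p) * hU + (ε : ZMod p) * hV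
    · rw [hu1, Nat.add_comm 1 m]
      push_cast
      have h2 : (2 : ZMod p) * (2 * (B : ZMod p) * 1 - (A : ZMod p) * (u (m + 1) : ZMod p)
          + (ε : ZMod p) * (v (m + 1) : ZMod p)) = 0 := by
        linear_combination (-(A : ZMod p)) * cI2 + (ε : ZMod p) * cI3
          + ((A : ZMod p) ^ 2 - 4 * (B : ZMod p)) * hεsq
      have := mul_left_cancel₀ h2p (h2.trans (mul_zero (2 : ZMod p)).symm)
      linear_combination this
  intro n
  constructor
  · rw [← ZMod.intCast_eq_intCast_iff]
    push_cast
    linear_combination main1 n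
  · rw [← ZMod.intCast_eq_intCast_iff]
    push_cast
    linear_combination main2 n
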